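/- For every fixed gadget graph H with distinguished vertices c, d, and every graph G, the graph ρ_H(G) obtained by replacing each edge of G with a disjoint copy of H (identifying endpoints with c and d) satisfies: any cycle of ρ_H(G) is either entirely contained in a single copy of H, or its intersection with each copy of H used is a path between the images of c and d in that copy. Consequently, if H is acyclic, then ρ_H(G) contains a cycle if and only if G contains a cycle and H contains a path from c to d. -/

import Mathlib

open SimpleGraph

/-- A vertex cover: a set of vertices meeting every edge. -/
def IsVertexCover {V : Type*} (G : SimpleGraph V) (U : Set V) : Prop :=
  ∀ ⦃u v⦄, G.Adj u v → u ∈ U ∨ v ∈ U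

/-- A feedback vertex set: a set of vertices whose removal leaves an acyclic graph. -/
def IsFVS {V : Type*} (G : SimpleGraph V) (U : Set V) : Prop :=
  (G.induce Uᶜ).IsAcyclic

/-- The vertex type of the edge-gadget image of `G`: the original vertices plus, for each
(oriented) edge of `G`, a fresh copy of the interior of the gadget graph `H`. -/
def EGVert {V W : Type*} [LinearOrder V] (G : SimpleGraph V) (c d : W) : Type _ :=
  V ⊕ ({p : V × V // G.Adj p.1 p.2 ∧ p.1 < p.2} × {w : W // w ≠ c ∧ w ≠ d})

/-- Base adjacency relation for the edge-gadget construction: each edge `(u,v)` of `G`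
(with `u < v`) is replaced by a fresh copy of `H`, identifying `u` with `c` and `v` with `d`. -/
def egBase {V W : Type*} [LinearOrder V] (G : SimpleGraph V) (H : SimpleGraph W) (c d : W)
    (x y : EGVert G c d) : Prop :=
  (∃ e : {p : V × V // G.Adj p.1 p.2 ∧ p.1 < p.2},
      x = Sum.inl e.1.1 ∧ y = Sum.inl e.1.2 ∧ H.Adj c d) ∨
  (∃ (e : {p : V × V // G.Adj p.1 p.2 ∧ p.1 < p.2}) (w : {w : W // w ≠ c ∧ w ≠ d}),
      x = Sum.inl e.1.1 ∧ y = Sum.inr (e, w) ∧ H.Adj c w.1) ∨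
  (∃ (e : {p : V × V // G.Adj p.1 p.2 ∧ p.1 < p.2}) (w : {w : W // w ≠ c ∧ w ≠ d}),
      x = Sum.inl e.1.2 ∧ y = Sum.inr (e, w) ∧ H.Adj d w.1) ∨
  (∃ (e : {p : V × V // G.Adj p.1 p.2 ∧ p.1 < p.2}) (w w' : {w : W // w ≠ c ∧ w ≠ d}),
      x = Sum.inr (e, w) ∧ y = Sum.inr (e, w') ∧ H.Adj w.1 w'.1)

/-- The edge-gadget image of `G`: every edge of `G` is replaced by a disjoint copy of `H`,
identifying the endpoints with the distinguished vertices `c` and `d` of `H`. -/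
def edgeGadget {V W : Type*} [LinearOrder V] (G : SimpleGraph V) (H : SimpleGraph W)
    (c d : W) : SimpleGraph (EGVert G c d) where
  Adj x y := egBase G H c d x y ∨ egBase G H c d y x
  symm := ⟨fun x y h => h.symm⟩
  loopless := by
    refine ⟨?_⟩
    intro x h
    have : egBase G H c d x x := by rcases h with h | h <;> exact h
    rcases this with ⟨e, h1, h2, _⟩ | ⟨e, w, h1, h2, _⟩ | ⟨e, w, h1, h2, _⟩
      | ⟨e, w, w', h1, h2, hadj⟩
    · rw [h1] at h2
      exact absurd (Sum.inl_injective h2) (ne_of_lt e.2.2)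
    · rw [h1] at h2; exact Sum.inl_ne_inr h2
    · rw [h1] at h2; exact Sum.inl_ne_inr h2
    · rw [h1] at h2
      obtain ⟨-, h⟩ := Prod.mk.injEq _ _ _ _ ▸ Sum.inr_injective h2
      exact H.irrefl (by rwa [h] at hadj)

/-- Membership in the copy of the gadget inserted for the (oriented) edge `e` of `G`:
the two endpoints of `e` together with the interior vertices of that copy. -/
def inCopy {V W : Type*} [LinearOrder V] (G : SimpleGraph V) (c d : W)
    (e : {p : V × V // G.Adj p.1 p.2 ∧ p.1 < p.2}) (x : EGVert G c d) : Prop :=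
  x = Sum.inl e.1.1 ∨ x = Sum.inl e.1.2 ∨ ∃ w : {w : W // w ≠ c ∧ w ≠ d}, x = Sum.inr (e, w)

attribute [reducible] EGVert

section EGAux

variable {V W : Type*} [LinearOrder V] {G : SimpleGraph V} {H : SimpleGraph W} {c d : W}

/-- Projection of a copy back to the gadget graph. -/
def gW (e : {p : V × V // G.Adj p.1 p.2 ∧ p.1 < p.2}) (c d : W) : EGVert G c d → W
  | Sum.inl u => if u = e.1.1 then c else d
  | Sum.inr q => q.2.1

lemma eg_inl_inCopy_iff {e : {p : V × V // G.Adj p.1 p.2 ∧ p.1 < p.2}} {u : V} :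
    inCopy G c d e (Sum.inl u) ↔ u = e.1.1 ∨ u = e.1.2 := by
  constructor
  · rintro (h | h | ⟨w, h⟩)
    · exact Or.inl (Sum.inl_injective h)
    · exact Or.inr (Sum.inl_injective h)
    · exact (Sum.inl_ne_inr h).elim
  · rintro (rfl | rfl)
    · exact Or.inl rfl
    · exact Or.inr (Or.inl rfl)

lemma eg_inr_eq_inr {e e' : {p : V × V // G.Adj p.1 p.2 ∧ p.1 < p.2}}
    {w w' : {w : W // w ≠ c ∧ w ≠ d}}
    (h : (Sum.inr (e, w) : EGVert G c d) = Sum.inr (e', w')) : e = e' ∧ w = w' := by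
  have h2 := Sum.inr_injective h
  exact ⟨congrArg Prod.fst h2, congrArg Prod.snd h2⟩

lemma eg_inr_inCopy_iff {e e' : {p : V × V // G.Adj p.1 p.2 ∧ p.1 < p.2}}
    {w : {w : W // w ≠ c ∧ w ≠ d}} :
    inCopy G c d e (Sum.inr (e', w)) ↔ e' = e := by
  constructor
  · rintro (h | h | ⟨w', h⟩)
    · exact (Sum.inl_ne_inr h.symm).elim
    · exact (Sum.inl_ne_inr h.symm).elim
    · exact (eg_inr_eq_inr h).1
  · rintro rfl; exact Or.inr (Or.inr ⟨w, rfl⟩)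

lemma eg_base_elim {x y : EGVert G c d} (h : egBase G H c d x y) :
    ∃ e, inCopy G c d e x ∧ inCopy G c d e y ∧ H.Adj (gW e c d x) (gW e c d y) ∧
      (∀ e', inCopy G c d e' x → inCopy G c d e' y → e' = e) ∧
      (∀ u u', x = Sum.inl u → y = Sum.inl u' → G.Adj u u') := by
  rcases h with ⟨e,h1,h2,h3⟩ | ⟨e,w,h1,h2,h3⟩ | ⟨e,w,h1,h2,h3⟩ | ⟨e,w,w',h1,h2,h3⟩ <;> subst h1 <;> subst h2
  · refine ⟨e, Or.inl rfl, Or.inr (Or.inl rfl), ?_, ?_, ?_⟩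
    · simp only [gW, if_pos rfl, if_neg e.2.2.ne']
      exact h3
    · intro f hx hy
      rw [eg_inl_inCopy_iff] at hx hy
      rcases hx with hx | hx <;> rcases hy with hy | hy
      · exact absurd (hx.trans hy.symm) e.2.2.ne
      · exact Subtype.ext (Prod.ext hx.symm hy.symm)
      · have : e.1.2 < e.1.1 := by rw [hy, hx]; exact f.2.2
        exact absurd this (asymm e.2.2)
      · exact absurd (hx.trans hy.symm) e.2.2.ne
    · intro u u' hu hu'
      rw [← Sum.inl_injective hu, ← Sum.inl_injective hu']
      exact e.2.1
  · refine ⟨e, Or.inl rfl, Or.inr (Or.inr ⟨w, rfl⟩), ?_, ?_, ?_⟩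
    · simpa only [gW, if_pos rfl, ↓reduceIte] using h3
    · intro f _ hy
      exact (eg_inr_inCopy_iff.mp hy).symm
    · intro u u' _ hu'
      exact (Sum.inl_ne_inr hu'.symm).elim
  · refine ⟨e, Or.inr (Or.inl rfl), Or.inr (Or.inr ⟨w, rfl⟩), ?_, ?_, ?_⟩
    · simpa only [gW, if_neg e.2.2.ne'] using h3
    · intro f _ hy
      exact (eg_inr_inCopy_iff.mp hy).symm
    · intro u u' _ hu'
      exact (Sum.inl_ne_inr hu'.symm).elim
  · refine ⟨e, Or.inr (Or.inr ⟨w, rfl⟩), Or.inr (Or.inr ⟨w', rfl⟩), h3, ?_, ?_⟩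
    · intro f hx _
      exact (eg_inr_inCopy_iff.mp hx).symm
    · intro u u' hu _
      exact (Sum.inl_ne_inr hu.symm).elim

lemma eg_adj_elim {x y : EGVert G c d} (h : (edgeGadget G H c d).Adj x y) :
    ∃ e, inCopy G c d e x ∧ inCopy G c d e y ∧ H.Adj (gW e c d x) (gW e c d y) ∧
      (∀ e', inCopy G c d e' x → inCopy G c d e' y → e' = e) ∧
      (∀ u u', x = Sum.inl u → y = Sum.inl u' → G.Adj u u') := by
  rcases h with h | h
  · exact eg_base_elim h
  · obtain ⟨e, hy, hx, hadj, huniq, hG⟩ := eg_base_elim h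
    exact ⟨e, hx, hy, hadj.symm, fun e' h1 h2 => huniq e' h2 h1,
      fun u u' hu hu' => (hG u' u hu' hu).symm⟩

lemma eg_adj_exists_copy {x y : EGVert G c d} (h : (edgeGadget G H c d).Adj x y) :
    ∃ e, inCopy G c d e x ∧ inCopy G c d e y := by
  obtain ⟨e, hx, hy, -⟩ := eg_adj_elim h
  exact ⟨e, hx, hy⟩

lemma eg_adj_inr_left {e} {wi : {w : W // w ≠ c ∧ w ≠ d}} {y : EGVert G c d}
    (h : (edgeGadget G H c d).Adj (Sum.inr (e, wi)) y) : inCopy G c d e y := by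
  obtain ⟨e', hx, hy, -⟩ := eg_adj_elim h
  rw [eg_inr_inCopy_iff.mp hx]; exact hy

lemma eg_adj_inl_inl {u u' : V} (h : (edgeGadget G H c d).Adj (Sum.inl u) (Sum.inl u')) :
    G.Adj u u' := by
  obtain ⟨e, -, -, -, -, hG⟩ := eg_adj_elim h
  exact hG u u' rfl rfl

/-- adjacency transfers along `gW` within a copy. -/
lemma eg_adj_gW {e} {x y : EGVert G c d} (h : (edgeGadget G H c d).Adj x y)
    (hx : inCopy G c d e x) (hy : inCopy G c d e y) : H.Adj (gW e c d x) (gW e c d y) := by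
  obtain ⟨e', -, -, hadj, huniq, -⟩ := eg_adj_elim h
  rw [huniq e hx hy]; exact hadj

/-- the boundary lemma: a vertex of a copy adjacent to a vertex outside it is an endpoint. -/
lemma eg_boundary {e} {x y : EGVert G c d} (h : (edgeGadget G H c d).Adj x y)
    (hx : inCopy G c d e x) (hy : ¬ inCopy G c d e y) :
    x = Sum.inl e.1.1 ∨ x = Sum.inl e.1.2 := by
  rcases hx with hx | hx | ⟨w, rfl⟩
  · exact Or.inl hx
  · exact Or.inr hx
  · exact absurd (eg_adj_inr_left h) hy

end EGAux

section EGWalk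

open SimpleGraph Walk

variable {V W : Type*} [LinearOrder V] {G : SimpleGraph V} {H : SimpleGraph W} {c d : W}

/-- An unordered pair of vertices lies in copy `e`. -/
def EIn (G : SimpleGraph V) (H : SimpleGraph W) (c d : W)
    (e : {p : V × V // G.Adj p.1 p.2 ∧ p.1 < p.2}) (ed : Sym2 (EGVert G c d)) : Prop :=
  ∃ p q : EGVert G c d, ed = s(p, q) ∧ inCopy G c d e p ∧ inCopy G c d e q

lemma EIn_mk {e} {x y : EGVert G c d} (hx : inCopy G c d e x) (hy : inCopy G c d e y) :
    EIn G H c d e s(x, y) := ⟨x, y, rfl, hx, hy⟩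

lemma EIn_elim {e} {x y : EGVert G c d} (h : EIn G H c d e s(x, y)) :
    inCopy G c d e x ∧ inCopy G c d e y := by
  obtain ⟨p, q, hpq, hp, hq⟩ := h
  rcases Sym2.eq_iff.mp hpq with ⟨rfl, rfl⟩ | ⟨rfl, rfl⟩
  · exact ⟨hp, hq⟩
  · exact ⟨hq, hp⟩

/-- Every support vertex of a walk is the start or has an incident edge in the walk. -/
lemma walk_mem_support_incident {α : Type*} {G' : SimpleGraph α} :
    ∀ {x y v : α} (q : G'.Walk x y), v ∈ q.support →
      v = x ∨ ∃ z, G'.Adj v z ∧ s(v, z) ∈ q.edges := by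
  intro x y v q
  induction q with
  | nil => intro hv; exact Or.inl (by simpa using hv)
  | @cons a b C h p ih =>
    intro hv
    rcases (by simpa using hv : v = a ∨ v ∈ p.support) with rfl | hv'
    · exact Or.inl rfl
    · rcases ih hv' with rfl | ⟨z, hz, hze⟩
      · exact Or.inr ⟨a, h.symm, by simp [Sym2.eq_swap]⟩
      · exact Or.inr ⟨z, hz, by simp [hze]⟩

/-- An interior vertex of copy `e` on a walk which is not the start has an incident
walk edge lying in copy `e`. -/
lemma eg_interior_incident {e} {wi : {w : W // w ≠ c ∧ w ≠ d}} {x y : EGVert G c d}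
    (q : (edgeGadget G H c d).Walk x y) (hv : (Sum.inr (e, wi) : EGVert G c d) ∈ q.support)
    (hne : (Sum.inr (e, wi) : EGVert G c d) ≠ x) :
    ∃ ed ∈ q.edges, EIn G H c d e ed := by
  rcases walk_mem_support_incident q hv with h | ⟨z, hz, hze⟩
  · exact absurd h hne
  · exact ⟨s(Sum.inr (e, wi), z), hze,
      EIn_mk (eg_inr_inCopy_iff.mpr rfl) (eg_adj_inr_left hz)⟩

/-- In a nonnil closed walk, every support vertex is in the support tail. -/
lemma closed_mem_support_tail {α : Type*} {G' : SimpleGraph α} {x v : α} (q : G'.Walk x x)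
    (hq : ¬ q.Nil) (hv : v ∈ q.support) : v ∈ q.support.tail := by
  cases q with
  | nil => exact absurd Walk.nil_nil hq
  | cons h p =>
    rcases (by simpa using hv) with rfl | hv'
    · simpa using p.end_mem_support
    · simpa using hv'

/-- Pull a walk lying inside copy `e` back to the gadget graph `H`. -/
lemma eg_pull {e} {a b : EGVert G c d} (q : (edgeGadget G H c d).Walk a b)
    (hall : ∀ v ∈ q.support, inCopy G c d e v) :
    ∃ p : H.Walk (gW e c d a) (gW e c d b),
      p.support = q.support.map (gW e c d) ∧
      p.edges = q.edges.map (Sym2.map (gW e c d)) ∧ p.length = q.length := by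
  induction q with
  | nil => exact ⟨Walk.nil, by simp [gW], by simp, by simp⟩
  | @cons a' b' C h p ih =>
    have hx : inCopy G c d e a' := hall _ (by simp)
    have hy : inCopy G c d e b' := hall _ (by simp [p.start_mem_support])
    obtain ⟨p', h1, h2, h3⟩ := ih (fun v hv => hall v (by simp [hv]))
    exact ⟨Walk.cons (eg_adj_gW h hx hy) p', by simp [h1], by simp [h2, Sym2.map_pair_eq],
      by simp [h3]⟩

lemma eg_gW_inj (hcd : c ≠ d) {e} {x y : EGVert G c d} (hx : inCopy G c d e x)
    (hy : inCopy G c d e y) (h : gW e c d x = gW e c d y) : x = y := by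
  rcases hx with hx | hx | ⟨w, rfl⟩ <;> rcases hy with hy | hy | ⟨w', rfl⟩ <;>
      subst_vars <;>
      simp only [gW, if_pos rfl, if_neg e.2.2.ne'] at h
  · rfl
  · exact absurd h hcd
  · exact absurd h.symm w'.2.1
  · exact absurd h.symm hcd
  · rfl
  · exact absurd h.symm w'.2.2
  · exact absurd h w.2.1
  · exact absurd h w.2.2
  · rw [Subtype.ext h]

/-- If `H` is acyclic, no cycle of the edge gadget lies inside a single copy. -/
lemma eg_no_copy_cycle (hcd : c ≠ d) (hH : H.IsAcyclic) {x : EGVert G c d}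
    (w : (edgeGadget G H c d).Walk x x) (hw : w.IsCycle) (e)
    (hall : ∀ v ∈ w.support, inCopy G c d e v) : False := by
  obtain ⟨p, hsupp, hedges, hlen⟩ := eg_pull w hall
  have hinj : ∀ v₁ ∈ w.support, ∀ v₂ ∈ w.support, gW e c d v₁ = gW e c d v₂ → v₁ = v₂ :=
    fun v₁ h1 v₂ h2 h => eg_gW_inj hcd (hall v₁ h1) (hall v₂ h2) h
  refine hH p ?_
  rw [Walk.isCycle_def]
  refine ⟨⟨?_⟩, ?_, ?_⟩
  · rw [hedges]
    refine List.Nodup.map_on ?_ hw.isTrail.edges_nodup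
    intro ed1 hed1 ed2 hed2 hmap
    induction ed1 using Sym2.inductionOn with
    | hf a1 b1 =>
    induction ed2 using Sym2.inductionOn with
    | hf a2 b2 =>
    have ha1 := w.fst_mem_support_of_mem_edges hed1
    have hb1 := w.snd_mem_support_of_mem_edges hed1
    have ha2 := w.fst_mem_support_of_mem_edges hed2
    have hb2 := w.snd_mem_support_of_mem_edges hed2
    rw [Sym2.map_pair_eq, Sym2.map_pair_eq, Sym2.eq_iff] at hmap
    rw [Sym2.eq_iff]
    rcases hmap with ⟨h1, h2⟩ | ⟨h1, h2⟩
    · exact Or.inl ⟨hinj _ ha1 _ ha2 h1, hinj _ hb1 _ hb2 h2⟩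
    · exact Or.inr ⟨hinj _ ha1 _ hb2 h1, hinj _ hb1 _ ha2 h2⟩
  · intro hnil
    have h3 := hw.three_le_length
    rw [← hlen, hnil] at h3
    simp at h3
  · have : p.support.tail = w.support.tail.map (gW e c d) := by
      rw [hsupp, w.support_eq_cons]
      simp
    rw [this]
    refine List.Nodup.map_on ?_ hw.support_nodup
    intro v₁ h1 v₂ h2 h
    exact hinj _ (List.mem_of_mem_tail h1) _ (List.mem_of_mem_tail h2) h

end EGWalk

section EGLift

open SimpleGraph Walk

variable {V W : Type*} [LinearOrder V] {G : SimpleGraph V} {H : SimpleGraph W} {c d : W}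

/-- Embedding of the gadget into the copy for `e`. -/
noncomputable def phiW (e : {p : V × V // G.Adj p.1 p.2 ∧ p.1 < p.2}) (c d : W) :
    W → EGVert G c d := fun w =>
  letI := Classical.decEq W
  if h1 : w = c then Sum.inl e.1.1
  else if h2 : w = d then Sum.inl e.1.2
  else Sum.inr (e, ⟨w, h1, h2⟩)

lemma phiW_c {e} : phiW (G := G) e c d c = Sum.inl e.1.1 := by simp [phiW]

lemma phiW_d {e} (hcd : c ≠ d) : phiW (G := G) e c d d = Sum.inl e.1.2 := by
  simp [phiW, hcd.symm]

lemma phiW_other {e} {w : W} (h1 : w ≠ c) (h2 : w ≠ d) :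
    phiW (G := G) e c d w = Sum.inr (e, ⟨w, h1, h2⟩) := by
  simp [phiW, h1, h2]

lemma phiW_mem_copy {e} (w : W) : inCopy G c d e (phiW e c d w) := by
  unfold phiW
  split_ifs
  · exact Or.inl rfl
  · exact Or.inr (Or.inl rfl)
  · exact Or.inr (Or.inr ⟨_, rfl⟩)

lemma phiW_cases {e} (x : W) :
    (x = c ∧ phiW (G := G) e c d x = Sum.inl e.1.1) ∨
    (x = d ∧ phiW (G := G) e c d x = Sum.inl e.1.2) ∨
    (∃ (h1 : x ≠ c) (h2 : x ≠ d), phiW (G := G) e c d x = Sum.inr (e, ⟨x, h1, h2⟩)) := by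
  unfold phiW
  split_ifs with h1 h2
  · exact Or.inl ⟨h1, rfl⟩
  · exact Or.inr (Or.inl ⟨h2, rfl⟩)
  · exact Or.inr (Or.inr ⟨h1, h2, rfl⟩)

lemma phiW_hom_adj {e} (hcd : c ≠ d) {a b : W} (h : H.Adj a b) :
    (edgeGadget G H c d).Adj (phiW e c d a) (phiW e c d b) := by
  rcases phiW_cases (G := G) (e := e) (c := c) (d := d) a with ⟨hac, hva⟩ | ⟨had, hva⟩ |
    ⟨hac, had, hva⟩ <;>
  rcases phiW_cases (G := G) (e := e) (c := c) (d := d) b with ⟨hbc, hvb⟩ | ⟨hbd, hvb⟩ |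
    ⟨hbc, hbd, hvb⟩ <;>
  rw [hva, hvb] <;> subst_vars
  · exact absurd rfl h.ne
  · exact Or.inl (Or.inl ⟨e, rfl, rfl, h⟩)
  · exact Or.inl (Or.inr (Or.inl ⟨e, _, rfl, rfl, h⟩))
  · exact Or.inr (Or.inl ⟨e, rfl, rfl, h.symm⟩)
  · exact absurd rfl h.ne
  · exact Or.inl (Or.inr (Or.inr (Or.inl ⟨e, _, rfl, rfl, h⟩)))
  · exact Or.inr (Or.inr (Or.inl ⟨e, _, rfl, rfl, h.symm⟩))
  · exact Or.inr (Or.inr (Or.inr (Or.inl ⟨e, _, rfl, rfl, h.symm⟩)))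
  · exact Or.inl (Or.inr (Or.inr (Or.inr ⟨e, _, _, rfl, rfl, h⟩)))

lemma phiW_inj {e} (hcd : c ≠ d) {a b : W} (h : phiW (G := G) e c d a = phiW e c d b) :
    a = b := by
  rcases phiW_cases (G := G) (e := e) (c := c) (d := d) a with ⟨hac, hva⟩ | ⟨had, hva⟩ |
    ⟨hac, had, hva⟩ <;>
  rcases phiW_cases (G := G) (e := e) (c := c) (d := d) b with ⟨hbc, hvb⟩ | ⟨hbd, hvb⟩ |
    ⟨hbc, hbd, hvb⟩ <;>
  rw [hva, hvb] at h
  · exact hac.trans hbc.symm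
  · exact absurd (Sum.inl_injective h) e.2.2.ne
  · exact absurd h Sum.inl_ne_inr
  · exact absurd (Sum.inl_injective h) e.2.2.ne'
  · exact had.trans hbd.symm
  · exact absurd h Sum.inl_ne_inr
  · exact absurd h.symm Sum.inl_ne_inr
  · exact absurd h.symm Sum.inl_ne_inr
  · exact congrArg Subtype.val (eg_inr_eq_inr h).2

/-- The sorted edge corresponding to an adjacency of `G`. -/
def esort (G : SimpleGraph V) {u u' : V} (h : G.Adj u u') :
    {p : V × V // G.Adj p.1 p.2 ∧ p.1 < p.2} :=
  if hlt : u < u' then ⟨(u, u'), h, hlt⟩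
  else ⟨(u', u), h.symm, (h.ne.lt_or_gt.resolve_left hlt)⟩

lemma esort_inl_iff {u u' w : V} (h : G.Adj u u') :
    inCopy G c d (esort G h) (Sum.inl w) ↔ w = u ∨ w = u' := by
  rw [eg_inl_inCopy_iff]
  unfold esort
  split_ifs <;> simp [or_comm]

lemma esort_fst {u u' : V} (h : G.Adj u u') :
    (esort G h).1.1 = u ∨ (esort G h).1.1 = u' := by
  unfold esort; split_ifs <;> simp

lemma esort_snd {u u' : V} (h : G.Adj u u') :
    (esort G h).1.2 = u ∨ (esort G h).1.2 = u' := by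
  unfold esort; split_ifs <;> simp

lemma esort_pair {u u' : V} (h : G.Adj u u') :
    s((esort G h).1.1, (esort G h).1.2) = s(u, u') := by
  unfold esort
  split_ifs <;> simp [Sym2.eq_swap]

/-- Lift of an edge of `G` to a path through the corresponding copy. -/
lemma eg_edge_lift (hcd : c ≠ d) (hp : H.Walk c d) (hpp : hp.IsPath) {u u' : V}
    (huu : G.Adj u u') :
    ∃ q : (edgeGadget G H c d).Walk (Sum.inl u) (Sum.inl u'),
      q.IsPath ∧ (∀ v ∈ q.support, inCopy G c d (esort G huu) v) := by
  set e := esort G huu with he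
  let f : H →g (edgeGadget G H c d) := ⟨phiW e c d, fun h => phiW_hom_adj hcd h⟩
  have hf : ∀ x, f x = phiW e c d x := fun _ => rfl
  have hmap : (hp.map f).IsPath :=
    Walk.map_isPath_of_injective (fun a b hab => phiW_inj hcd hab) hpp
  have hsupp : ∀ v ∈ (hp.map f).support, inCopy G c d e v := by
    intro v hv
    rw [Walk.support_map] at hv
    obtain ⟨w, -, rfl⟩ := List.mem_map.mp hv
    exact phiW_mem_copy w
  by_cases hlt : u < u'
  · have h1 : f c = Sum.inl u := by rw [hf, phiW_c, he]; simp [esort, hlt]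
    have h2 : f d = Sum.inl u' := by rw [hf, phiW_d hcd, he]; simp [esort, hlt]
    refine ⟨(hp.map f).copy h1 h2, by simpa using hmap, ?_⟩
    intro v hv
    rw [Walk.support_copy] at hv
    exact hsupp v hv
  · have h1 : f c = Sum.inl u' := by rw [hf, phiW_c, he]; simp [esort, hlt]
    have h2 : f d = Sum.inl u := by rw [hf, phiW_d hcd, he]; simp [esort, hlt]
    refine ⟨((hp.map f).copy h1 h2).reverse, by rw [Walk.isPath_reverse_iff, Walk.isPath_copy]; exact hmap, ?_⟩
    intro v hv
    rw [Walk.support_reverse, List.mem_reverse, Walk.support_copy] at hv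
    exact hsupp v hv

/-- Lift of a path of `G` to a path of the edge gadget. -/
lemma eg_lift_walk (hcd : c ≠ d) (hp : H.Walk c d) (hpp : hp.IsPath) :
    ∀ {a b : V} (pg : G.Walk a b), pg.IsPath →
    ∃ q : (edgeGadget G H c d).Walk (Sum.inl a) (Sum.inl b), q.IsPath ∧
      (∀ v ∈ q.support, (∃ u ∈ pg.support, v = Sum.inl u) ∨
         (∃ e wi, v = Sum.inr (e, wi) ∧ s(e.1.1, e.1.2) ∈ pg.edges)) ∧
      (∀ u ∈ pg.support, Sum.inl u ∈ q.support) := by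
  intro a b pg
  induction pg with
  | @nil a0 =>
    intro _
    refine ⟨Walk.nil, by simp, ?_, by intro u hu; simp_all⟩
    intro v hv
    have hva : v = Sum.inl a0 := by simpa using hv
    exact Or.inl ⟨a0, by simp, hva⟩
  | @cons a m b h p ih =>
    intro hpg
    obtain ⟨q2, hq2path, hq2spec, hq2mem⟩ := ih hpg.of_cons
    obtain ⟨q1, hq1path, hq1all⟩ := eg_edge_lift hcd hp hpp h
    have ham : a ∉ p.support := ((Walk.cons_isPath_iff _ _).mp hpg).2
    refine ⟨q1.append q2, ?_, ?_, ?_⟩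
    · rw [Walk.isPath_def, Walk.support_append]
      rw [List.nodup_append]
      refine ⟨hq1path.support_nodup, hq2path.support_nodup.tail, ?_⟩
      intro v hv1 _ hv2' hvv
      subst hvv
      have hv2 : v ∈ q2.support := List.mem_of_mem_tail hv2'
      have hcop := hq1all v hv1
      rcases hq2spec v hv2 with ⟨u, hu, rfl⟩ | ⟨e, wi, rfl, hedge⟩
      · rcases (esort_inl_iff h).mp hcop with rfl | rfl
        · exact ham hu
        · have := hq2path.support_nodup
          rw [q2.support_eq_cons] at this
          exact (List.nodup_cons.mp this).1 hv2'
      · rw [eg_inr_inCopy_iff.mp hcop, esort_pair] at hedge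
        have := hpg.isTrail.edges_nodup
        rw [Walk.edges_cons, List.nodup_cons] at this
        exact this.1 hedge
    · intro v hv
      rw [Walk.mem_support_append_iff _ _] at hv
      rcases hv with hv | hv
      · have hcop := hq1all v hv
        rcases hcop with hcop | hcop | ⟨wi, rfl⟩
        · rcases esort_fst h with h' | h'
          · exact Or.inl ⟨a, by simp, by rw [hcop, h']⟩
          · exact Or.inl ⟨m, by simp [p.start_mem_support], by rw [hcop, h']⟩
        · rcases esort_snd h with h' | h'
          · exact Or.inl ⟨a, by simp, by rw [hcop, h']⟩
          · exact Or.inl ⟨m, by simp [p.start_mem_support], by rw [hcop, h']⟩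
        · exact Or.inr ⟨_, wi, rfl, by rw [esort_pair]; simp⟩
      · rcases hq2spec v hv with ⟨u, hu, rfl⟩ | ⟨e, wi, rfl, hedge⟩
        · exact Or.inl ⟨u, by simp [hu], rfl⟩
        · exact Or.inr ⟨e, wi, rfl, by simp [hedge]⟩
    · intro u hu
      rcases (by simpa using hu : u = a ∨ u ∈ p.support) with rfl | hu'
      · exact (Walk.mem_support_append_iff _ _).mpr (Or.inl q1.start_mem_support)
      · exact (Walk.mem_support_append_iff _ _).mpr (Or.inr (hq2mem u hu'))

end EGLift

section EGMain

open SimpleGraph Walk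

variable {V W : Type*} [LinearOrder V] {G : SimpleGraph V} {H : SimpleGraph W} {c d : W}

/-- A nonnil closed walk does not have nodup support. -/
lemma closed_not_nodup {α : Type*} {G' : SimpleGraph α} {x : α} (r : G'.Walk x x)
    (hr : ¬ r.Nil) : ¬ r.support.Nodup := by
  intro hn
  have hx : x ∈ r.support.tail := closed_mem_support_tail r hr r.start_mem_support
  rw [r.support_eq_cons] at hn
  exact (List.nodup_cons.mp hn).1 hx

/-- The main structure lemma: walking to a vertex outside copy `e`, the edges of the walk
inside copy `e` form at most one contiguous run, crossing the copy from one endpoint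
to the other. -/
lemma eg_main {e} {x b : EGVert G c d} (q : (edgeGadget G H c d).Walk x b)
    (hb : ¬ inCopy G c d e b) (hs : q.support.Nodup) :
    (∀ ed ∈ q.edges, ¬ EIn G H c d e ed) ∨
    (∃ (y : EGVert G c d) (r : (edgeGadget G H c d).Walk x y)
        (q' : (edgeGadget G H c d).Walk y b),
        q = r.append q' ∧ ¬ r.Nil ∧ (∀ v ∈ r.support, inCopy G c d e v) ∧
        (y = Sum.inl e.1.1 ∨ y = Sum.inl e.1.2) ∧
        (∀ ed ∈ q'.edges, ¬ EIn G H c d e ed)) ∨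
    (∃ (u y : EGVert G c d) (q₁ : (edgeGadget G H c d).Walk x u)
        (r : (edgeGadget G H c d).Walk u y) (q₂ : (edgeGadget G H c d).Walk y b),
        q = q₁.append (r.append q₂) ∧ ¬ q₁.Nil ∧
        (∀ ed ∈ q₁.edges, ¬ EIn G H c d e ed) ∧
        (∀ v ∈ r.support, inCopy G c d e v) ∧
        ((u = Sum.inl e.1.1 ∧ y = Sum.inl e.1.2) ∨
          (u = Sum.inl e.1.2 ∧ y = Sum.inl e.1.1)) ∧
        (∀ ed ∈ q₂.edges, ¬ EIn G H c d e ed)) := by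
  induction q with
  | nil => exact Or.inl (by simp)
  | @cons x z b h q ih =>
    have hsx : x ∉ q.support := by
      rw [Walk.support_cons, List.nodup_cons] at hs
      exact hs.1
    have hsq : q.support.Nodup := by
      rw [Walk.support_cons, List.nodup_cons] at hs
      exact hs.2
    rcases ih hb hsq with hA | hB | hMid
    · -- rest has no copy-e edges
      by_cases hEI : EIn G H c d e s(x, z)
      · -- start of a run at x
        obtain ⟨hex, hez⟩ := EIn_elim hEI
        -- z must be a boundary vertex
        have hz : z = Sum.inl e.1.1 ∨ z = Sum.inl e.1.2 := by
          cases q with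
          | nil => exact absurd hez hb
          | @cons z z₂ b h₂ q₂ =>
            have hne : ¬ inCopy G c d e z₂ := by
              intro hez₂
              exact hA s(z, z₂) (by simp) (EIn_mk hez hez₂)
            exact eg_boundary h₂ hez hne
        refine Or.inr (Or.inl ⟨z, Walk.cons h Walk.nil, q, by simp, by simp, ?_, hz, hA⟩)
        intro v hv
        rcases (by simpa using hv : v = x ∨ v = z) with rfl | rfl
        · exact hex
        · exact hez
      · -- no copy-e edges at all
        refine Or.inl ?_
        intro ed hed
        rcases (by simpa using hed : ed = s(x, z) ∨ ed ∈ q.edges) with rfl | hed'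
        · exact hEI
        · exact hA ed hed'
    · -- rest starts with a run
      obtain ⟨y, r, q', rfl, hrnil, hrsupp, hy, hq'⟩ := hB
      have hez : inCopy G c d e z := hrsupp z r.start_mem_support
      by_cases hEI : EIn G H c d e s(x, z)
      · -- extend the run
        refine Or.inr (Or.inl ⟨y, Walk.cons h r, q', by simp, by simp, ?_, hy, hq'⟩)
        intro v hv
        rcases (by simpa using hv : v = x ∨ v ∈ r.support) with rfl | hv'
        · exact (EIn_elim hEI).1
        · exact hrsupp v hv'
      · -- the run becomes a middle run
        have hnex : ¬ inCopy G c d e x := fun hex => hEI (EIn_mk hex hez)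
        have hz : z = Sum.inl e.1.1 ∨ z = Sum.inl e.1.2 :=
          eg_boundary h.symm hez hnex
        have hzy : z ≠ y := by
          intro hzy
          subst hzy
          have hrn : r.support.Nodup :=
            hsq.sublist (by
              rw [Walk.support_append]
              exact List.sublist_append_left _ _)
          exact closed_not_nodup r hrnil hrn
        have horient : (z = Sum.inl e.1.1 ∧ y = Sum.inl e.1.2) ∨
            (z = Sum.inl e.1.2 ∧ y = Sum.inl e.1.1) := by
          rcases hz with hz1 | hz2 <;> rcases hy with hy1 | hy2
          · exact absurd (hz1.trans hy1.symm) hzy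
          · exact Or.inl ⟨hz1, hy2⟩
          · exact Or.inr ⟨hz2, hy1⟩
          · exact absurd (hz2.trans hy2.symm) hzy
        refine Or.inr (Or.inr ⟨z, y, Walk.cons h Walk.nil, r, q', by simp, by simp, ?_,
          hrsupp, horient, hq'⟩)
        intro ed hed
        rcases (by simpa using hed : ed = s(x, z)) with rfl
        exact hEI
    · -- rest has a middle run
      obtain ⟨u, y, q₁, r, q₂, rfl, hq₁nil, hq₁, hrsupp, horient, hq₂⟩ := hMid
      by_cases hEI : EIn G H c d e s(x, z)
      · -- impossible: z would be revisited
        exfalso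
        have hez : inCopy G c d e z := (EIn_elim hEI).2
        -- first edge of q₁ is not in copy e, so z is a boundary vertex
        have hz : z = Sum.inl e.1.1 ∨ z = Sum.inl e.1.2 := by
          cases q₁ with
          | nil => exact absurd Walk.nil_nil hq₁nil
          | @cons z z₁ u h₁ t₁ =>
            have hne : ¬ inCopy G c d e z₁ := by
              intro hez₁
              exact hq₁ s(z, z₁) (by simp) (EIn_mk hez hez₁)
            exact eg_boundary h₁ hez hne
        have huy : u ≠ y := by
          rcases horient with ⟨hu, hy⟩ | ⟨hu, hy⟩
          · rw [hu, hy]; exact fun hh => e.2.2.ne (Sum.inl_injective hh)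
          · rw [hu, hy]; exact fun hh => e.2.2.ne' (Sum.inl_injective hh)
        have hrnil : ¬ r.Nil := Walk.not_nil_of_ne huy
        rcases hz with hz | hz
        · -- z is one of the two endpoints; both lead to duplication
          rcases horient with ⟨hu, hy⟩ | ⟨hu, hy⟩
          · -- z = u : q₁ closed and nonnil
            have hzu : z = u := hz.trans hu.symm
            subst hzu
            exact closed_not_nodup q₁ hq₁nil (hsq.sublist (by
              rw [Walk.support_append]
              exact List.sublist_append_left _ _))
          · -- z = y : y appears in q₁ part and in r part
            have hzy : z = y := hz.trans hy.symm
            have h1 : z ∈ q₁.support := q₁.start_mem_support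
            have h2 : z ∈ (r.append q₂).support.tail := by
              rw [Walk.tail_support_append]
              exact List.mem_append_left _ (hzy ▸ end_mem_tail_support_of_ne huy r)
            rw [Walk.support_append, List.nodup_append] at hsq
            exact hsq.2.2 _ h1 _ h2 rfl
        · rcases horient with ⟨hu, hy⟩ | ⟨hu, hy⟩
          · have hzy : z = y := hz.trans hy.symm
            have h1 : z ∈ q₁.support := q₁.start_mem_support
            have h2 : z ∈ (r.append q₂).support.tail := by
              rw [Walk.tail_support_append]
              exact List.mem_append_left _ (hzy ▸ end_mem_tail_support_of_ne huy r)
            rw [Walk.support_append, List.nodup_append] at hsq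
            exact hsq.2.2 _ h1 _ h2 rfl
          · have hzu : z = u := hz.trans hu.symm
            subst hzu
            exact closed_not_nodup q₁ hq₁nil (hsq.sublist (by
              rw [Walk.support_append]
              exact List.sublist_append_left _ _))
      · -- prepend the edge to q₁
        refine Or.inr (Or.inr ⟨u, y, Walk.cons h q₁, r, q₂, by simp, by simp, ?_,
          hrsupp, horient, hq₂⟩)
        intro ed hed
        rcases (by simpa using hed : ed = s(x, z) ∨ ed ∈ q₁.edges) with rfl | hed'
        · exact hEI
        · exact hq₁ ed hed'

end EGMain

section EGProj

open SimpleGraph Walk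

variable {V W : Type*} [LinearOrder V] {G : SimpleGraph V} {H : SimpleGraph W} {c d : W}

lemma eg_vert_cases (v : EGVert G c d) :
    (∃ u : V, v = Sum.inl u) ∨
    (∃ (e : {p : V × V // G.Adj p.1 p.2 ∧ p.1 < p.2}) (wi : {w : W // w ≠ c ∧ w ≠ d}),
      v = Sum.inr (e, wi)) :=
  match v with
  | Sum.inl u => Or.inl ⟨u, rfl⟩
  | Sum.inr (e, wi) => Or.inr ⟨e, wi, rfl⟩

lemma eg_adj_inl_inr {u : V} {e} {wi : {w : W // w ≠ c ∧ w ≠ d}}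
    (h : (edgeGadget G H c d).Adj (Sum.inl u) (Sum.inr (e, wi))) :
    u = e.1.1 ∨ u = e.1.2 := by
  obtain ⟨e', hx, hy, -⟩ := eg_adj_elim h
  rw [← eg_inr_inCopy_iff.mp hy] at hx
  exact eg_inl_inCopy_iff.mp hx

/-- Two distinct endpoints of `e` are adjacent and form the pair of `e`. -/
lemma eg_pair_adj {e : {p : V × V // G.Adj p.1 p.2 ∧ p.1 < p.2}} {a b : V} (ha : a = e.1.1 ∨ a = e.1.2) (hb : b = e.1.1 ∨ b = e.1.2)
    (hne : a ≠ b) : G.Adj a b ∧ s(a, b) = s(e.1.1, e.1.2) := by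
  rcases ha with rfl | rfl <;> rcases hb with rfl | rfl
  · exact absurd rfl hne
  · exact ⟨e.2.1, rfl⟩
  · exact ⟨e.2.1.symm, Sym2.eq_swap⟩
  · exact absurd rfl hne

lemma eg_pair_eq {e f : {p : V × V // G.Adj p.1 p.2 ∧ p.1 < p.2}}
    (h : s(e.1.1, e.1.2) = s(f.1.1, f.1.2)) : e = f := by
  rcases Sym2.eq_iff.mp h with ⟨h1, h2⟩ | ⟨h1, h2⟩
  · exact Subtype.ext (Prod.ext h1 h2)
  · have : e.1.1 < e.1.1 := by
      calc e.1.1 < e.1.2 := e.2.2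
        _ = f.1.1 := h2
        _ < f.1.2 := f.2.2
        _ = e.1.1 := h1.symm
    exact absurd this (lt_irrefl _)

/-- A walk all of whose vertices are interior stays in a single copy. -/
lemma eg_all_interior {e} :
    ∀ {s b : EGVert G c d} (q : (edgeGadget G H c d).Walk s b),
      (∃ wi : {w : W // w ≠ c ∧ w ≠ d}, s = Sum.inr (e, wi)) →
      (∀ v ∈ q.support, ∀ u : V, v ≠ Sum.inl u) →
      ∀ v ∈ q.support, inCopy G c d e v := by
  intro s b q
  induction q with
  | nil =>
    rintro ⟨wi, rfl⟩ -
    intro v hv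
    rw [(by simpa using hv : v = Sum.inr (e, wi))]
    exact eg_inr_inCopy_iff.mpr rfl
  | @cons x z b h q ih =>
    rintro ⟨wi, rfl⟩ hnoinl
    have hez : inCopy G c d e z := eg_adj_inr_left h
    intro v hv
    rcases (by simpa using hv : v = Sum.inr (e, wi) ∨ v ∈ q.support) with rfl | hv'
    · exact eg_inr_inCopy_iff.mpr rfl
    · rcases eg_vert_cases z with ⟨u, rfl⟩ | ⟨e₂, wj, rfl⟩
      · exact absurd rfl (hnoinl _ (by simp [q.start_mem_support]) u)
      · have he₂ : e₂ = e := eg_inr_inCopy_iff.mp hez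
        subst he₂
        exact ih ⟨wj, rfl⟩ (fun v hv u => hnoinl v (by simp [hv]) u) v hv'

/-- Skip an interior prefix of a walk until the first original vertex. -/
lemma eg_skip {e} :
    ∀ {s b : EGVert G c d} (q : (edgeGadget G H c d).Walk s b),
      (∃ wi : {w : W // w ≠ c ∧ w ≠ d}, s = Sum.inr (e, wi)) →
      (∃ t : V, b = Sum.inl t) →
    ∃ (u' : V) (_ : u' = e.1.1 ∨ u' = e.1.2)
      (q₂ : (edgeGadget G H c d).Walk (Sum.inl u') b),
      q₂.support.Sublist q.support ∧
      (∀ v ∈ q.support, v ∈ q₂.support ∨ inCopy G c d e v) := by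
  intro s b q
  induction q with
  | nil =>
    rintro ⟨wi, rfl⟩ ⟨t, ht⟩
    exact absurd ht (by simp)
  | @cons x z b h q ih =>
    rintro ⟨wi, rfl⟩ hb
    have hez : inCopy G c d e z := eg_adj_inr_left h
    rcases eg_vert_cases z with ⟨u, rfl⟩ | ⟨e₂, wj, rfl⟩
    · refine ⟨u, eg_inl_inCopy_iff.mp hez, q, ?_, ?_⟩
      · simp [List.sublist_cons_self]
      · intro v hv
        rcases (by simpa using hv : v = Sum.inr (e, wi) ∨ v ∈ q.support) with rfl | hv'
        · exact Or.inr (eg_inr_inCopy_iff.mpr rfl)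
        · exact Or.inl hv'
    · have he₂ : e₂ = e := eg_inr_inCopy_iff.mp hez
      subst he₂
      obtain ⟨u', hu', q₂, hsub, hcov⟩ := ih ⟨wj, rfl⟩ hb
      refine ⟨u', hu', q₂, hsub.trans (by simp [List.sublist_cons_self]), ?_⟩
      intro v hv
      rcases (by simpa using hv : v = Sum.inr (e₂, wi) ∨ v ∈ q.support) with rfl | hv'
      · exact Or.inr (eg_inr_inCopy_iff.mpr rfl)
      · exact hcov v hv'

/-- Project a walk of the edge gadget between original vertices to a walk of `G`. -/
lemma eg_proj_aux :
    ∀ (n : ℕ) {x b : EGVert G c d} (q : (edgeGadget G H c d).Walk x b) {a t : V},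
      x = Sum.inl a → b = Sum.inl t → q.length ≤ n → q.support.Nodup →
    ∃ pg : G.Walk a t,
      (List.map Sum.inl pg.support).Sublist q.support ∧
      (∀ v ∈ q.support, (∃ u ∈ pg.support, v = Sum.inl u) ∨
        (∃ e wi, v = Sum.inr (e, wi) ∧ s(e.1.1, e.1.2) ∈ pg.edges)) := by
  intro n
  induction n with
  | zero =>
    intro x b q a t hx hb hlen hnd
    cases q with
    | nil =>
      obtain rfl : a = t := Sum.inl_injective (hx.symm.trans hb)
      subst hx
      refine ⟨Walk.nil, by simp, ?_⟩
      intro v hv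
      exact Or.inl ⟨a, by simp, by simpa using hv⟩
    | cons h q' => simp at hlen
  | succ n ihn =>
    intro x b q a t hx hb hlen hnd
    cases q with
    | nil =>
      obtain rfl : a = t := Sum.inl_injective (hx.symm.trans hb)
      subst hx
      refine ⟨Walk.nil, by simp, ?_⟩
      intro v hv
      exact Or.inl ⟨a, by simp, by simpa using hv⟩
    | @cons x z b h q' =>
      subst hx
      have hnd' : q'.support.Nodup := by
        rw [Walk.support_cons, List.nodup_cons] at hnd
        exact hnd.2
      have hxnotin : (Sum.inl a : EGVert G c d) ∉ q'.support := by
        rw [Walk.support_cons, List.nodup_cons] at hnd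
        exact hnd.1
      rcases eg_vert_cases z with ⟨m, rfl⟩ | ⟨e, wi, rfl⟩
      · -- direct edge
        have hadj : G.Adj a m := eg_adj_inl_inl h
        obtain ⟨pg', hsub, hcov⟩ := ihn q' rfl hb (by simpa using hlen) hnd'
        refine ⟨Walk.cons hadj pg', ?_, ?_⟩
        · simpa using hsub
        · intro v hv
          rcases (by simpa using hv : v = Sum.inl a ∨ v ∈ q'.support) with rfl | hv'
          · exact Or.inl ⟨a, by simp, rfl⟩
          · rcases hcov v hv' with ⟨u, hu, rfl⟩ | ⟨e, wj, rfl, hedge⟩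
            · exact Or.inl ⟨u, by simp [hu], rfl⟩
            · exact Or.inr ⟨e, wj, rfl, by simp [hedge]⟩
      · -- entering a copy
        have ha : a = e.1.1 ∨ a = e.1.2 := eg_adj_inl_inr h
        obtain ⟨u', hu', q₂, hsub2, hcov2⟩ := eg_skip q' ⟨wi, rfl⟩ ⟨t, hb⟩
        have hne : a ≠ u' := by
          rintro rfl
          exact hxnotin (hsub2.mem q₂.start_mem_support)
        obtain ⟨hadj, hpair⟩ := eg_pair_adj ha hu' hne
        have hlen2 : q₂.length ≤ n := by
          have h1 : q₂.support.length ≤ q'.support.length := hsub2.length_le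
          rw [Walk.length_support, Walk.length_support] at h1
          have h2 : q'.length ≤ n := by simpa using hlen
          omega
        obtain ⟨pg', hsub, hcov⟩ := ihn q₂ rfl hb hlen2 (hnd'.sublist hsub2)
        refine ⟨Walk.cons hadj pg', ?_, ?_⟩
        · simpa using hsub.trans hsub2
        · intro v hv
          rcases (by simpa using hv : v = Sum.inl a ∨ v ∈ q'.support) with rfl | hv'
          · exact Or.inl ⟨a, by simp, rfl⟩
          · rcases hcov2 v hv' with hv2 | hcop
            · rcases hcov v hv2 with ⟨u, hu, rfl⟩ | ⟨e₃, wj, rfl, hedge⟩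
              · exact Or.inl ⟨u, by simp [hu], rfl⟩
              · exact Or.inr ⟨e₃, wj, rfl, by simp [hedge]⟩
            · rcases hcop with hcop | hcop | ⟨wj, rfl⟩
              · rcases ha with ha' | ha'
                · exact Or.inl ⟨a, by simp, by rw [hcop, ha']⟩
                · rcases hu' with hu'' | hu''
                  · exact Or.inl ⟨u', by simp [pg'.start_mem_support], by rw [hcop, hu'']⟩
                  · exact absurd (ha'.trans hu''.symm) hne
              · rcases ha with ha' | ha'
                · rcases hu' with hu'' | hu''
                  · exact absurd (ha'.trans hu''.symm) hne
                  · exact Or.inl ⟨u', by simp [pg'.start_mem_support], by rw [hcop, hu'']⟩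
                · exact Or.inl ⟨a, by simp, by rw [hcop, ha']⟩
              · refine Or.inr ⟨e, wj, rfl, ?_⟩
                rw [← hpair]
                simp

end EGProj

section EGCycle

open SimpleGraph Walk

variable {V W : Type*} [LinearOrder V] {G : SimpleGraph V} {H : SimpleGraph W} {c d : W}

lemma walk_exists_first_edge {α : Type*} {G' : SimpleGraph α} {x b : α} (q : G'.Walk x b)
    (h : ¬ q.Nil) : ∃ z, G'.Adj x z ∧ s(x, z) ∈ q.edges := by
  cases q with
  | nil => exact absurd Walk.nil_nil h
  | cons h' q' => exact ⟨_, h', by simp⟩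

lemma rotate_not_nil {α : Type*} [DecidableEq α] {G' : SimpleGraph α} {x s : α} (w : G'.Walk x x)
    (hs : s ∈ w.support) (hnil : ¬ w.Nil) : ¬ (w.rotate s hs).Nil := by
  intro hn
  rw [Walk.nil_iff_length_eq] at hn hnil
  have h1 : (w.rotate s hs).support.tail.length = w.support.tail.length :=
    (Walk.support_rotate w s hs).perm.length_eq
  rw [List.length_tail, List.length_tail, Walk.length_support, Walk.length_support] at h1
  omega

lemma rotate_mem_support {α : Type*} [DecidableEq α] {G' : SimpleGraph α} {x s : α} (w : G'.Walk x x)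
    (hs : s ∈ w.support) (hnil : ¬ w.Nil) (v : α) :
    v ∈ (w.rotate s hs).support ↔ v ∈ w.support := by
  have h1 := Walk.support_rotate w s hs
  constructor
  · intro hv
    exact List.mem_of_mem_tail (h1.mem_iff.mp
      (closed_mem_support_tail _ (rotate_not_nil w hs hnil) hv))
  · intro hv
    exact List.mem_of_mem_tail (h1.mem_iff.mpr (closed_mem_support_tail _ hnil hv))

/-- In a cycle through a vertex outside copy `e` that uses an edge of copy `e`, the
edges of copy `e` form exactly one run crossing the copy. -/
lemma eg_cycle_run {e} {s : EGVert G c d} (w' : (edgeGadget G H c d).Walk s s)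
    (hw' : w'.IsCycle) (hs_not : ¬ inCopy G c d e s)
    (hed : ∃ ed ∈ w'.edges, EIn G H c d e ed) :
    ∃ (u y : EGVert G c d) (q₁ : (edgeGadget G H c d).Walk s u)
      (r : (edgeGadget G H c d).Walk u y) (q₂ : (edgeGadget G H c d).Walk y s),
      w' = q₁.append (r.append q₂) ∧ ¬ q₁.Nil ∧
      (∀ ed ∈ q₁.edges, ¬ EIn G H c d e ed) ∧
      (∀ v ∈ r.support, inCopy G c d e v) ∧
      ((u = Sum.inl e.1.1 ∧ y = Sum.inl e.1.2) ∨
        (u = Sum.inl e.1.2 ∧ y = Sum.inl e.1.1)) ∧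
      (∀ ed ∈ q₂.edges, ¬ EIn G H c d e ed) := by
  cases w' with
  | nil => exact absurd rfl hw'.isCircuit.ne_nil
  | @cons x z b h t =>
    have htnd : t.support.Nodup := by simpa using hw'.support_nodup
    have hfirst : ¬ EIn G H c d e s(s, z) := fun hEI => hs_not (EIn_elim hEI).1
    rcases eg_main t hs_not htnd with hA | hB | hMid
    · exfalso
      obtain ⟨ed, hedmem, hEI⟩ := hed
      rcases (by simpa using hedmem : ed = s(s, z) ∨ ed ∈ t.edges) with rfl | hmem
      · exact hfirst hEI
      · exact hA ed hmem hEI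
    · obtain ⟨y, r, q', rfl, hrnil, hrsupp, hy, hq'⟩ := hB
      have hez : inCopy G c d e z := hrsupp z r.start_mem_support
      have hz : z = Sum.inl e.1.1 ∨ z = Sum.inl e.1.2 := eg_boundary h.symm hez hs_not
      have hzy : z ≠ y := by
        rintro rfl
        exact closed_not_nodup r hrnil (htnd.sublist (by
          rw [Walk.support_append]
          exact List.sublist_append_left _ _))
      have horient : (z = Sum.inl e.1.1 ∧ y = Sum.inl e.1.2) ∨
          (z = Sum.inl e.1.2 ∧ y = Sum.inl e.1.1) := by
        rcases hz with hz1 | hz2 <;> rcases hy with hy1 | hy2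
        · exact absurd (hz1.trans hy1.symm) hzy
        · exact Or.inl ⟨hz1, hy2⟩
        · exact Or.inr ⟨hz2, hy1⟩
        · exact absurd (hz2.trans hy2.symm) hzy
      refine ⟨z, y, Walk.cons h Walk.nil, r, q', by simp, by simp, ?_, hrsupp, horient, hq'⟩
      intro ed hed'
      rcases (by simpa using hed' : ed = s(s, z)) with rfl
      exact hfirst
    · obtain ⟨u, y, q₁, r, q₂, rfl, hq₁nil, hq₁, hrsupp, horient, hq₂⟩ := hMid
      refine ⟨u, y, Walk.cons h q₁, r, q₂, by simp, by simp, ?_, hrsupp, horient, hq₂⟩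
      intro ed hed'
      rcases (by simpa using hed' : ed = s(s, z) ∨ ed ∈ q₁.edges) with rfl | hmem
      · exact hfirst
      · exact hq₁ ed hmem

/-- Part 1 of the theorem as a standalone lemma. -/
lemma eg_part1 (hcd : c ≠ d) {x : EGVert G c d} (w : (edgeGadget G H c d).Walk x x)
    (hw : w.IsCycle) :
    (∃ e, ∀ v ∈ w.support, inCopy G c d e v) ∨
    (∀ e, (∃ ed ∈ w.edges, ∃ p q : EGVert G c d,
              ed = s(p, q) ∧ inCopy G c d e p ∧ inCopy G c d e q) →
      ∃ p : (edgeGadget G H c d).Walk (Sum.inl e.1.1) (Sum.inl e.1.2),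
        p.IsPath ∧ ∀ v, v ∈ p.support ↔ (v ∈ w.support ∧ inCopy G c d e v)) := by
  classical
  by_cases hone : ∃ e, ∀ v ∈ w.support, inCopy G c d e v
  · exact Or.inl hone
  right
  intro e hede
  push_neg at hone
  obtain ⟨s, hsmem, hsnot⟩ := hone e
  have hwnil : ¬ w.Nil := hw.isCircuit.not_nil
  have hw'cyc : (w.rotate s hsmem).IsCycle := hw.rotate hsmem
  have hmemiff : ∀ v, v ∈ (w.rotate s hsmem).support ↔ v ∈ w.support :=
    rotate_mem_support w hsmem hwnil
  have hedgeiff : ∀ ed, ed ∈ (w.rotate s hsmem).edges ↔ ed ∈ w.edges :=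
    fun ed => (Walk.rotate_edges w s hsmem).mem_iff
  obtain ⟨ed, hedmem, p0, q0, hedeq, hp0, hq0⟩ := hede
  obtain ⟨u, y, q₁, r, q₂, hdecomp, hq₁nil, hq₁, hrsupp, horient, hq₂⟩ :=
    eg_cycle_run (w.rotate s hsmem) hw'cyc hsnot
      ⟨ed, (hedgeiff ed).mpr hedmem, p0, q0, hedeq, hp0, hq0⟩
  have hsu : s ≠ u := fun hh => hsnot (hh ▸ hrsupp u r.start_mem_support)
  have huy : u ≠ y := by
    rcases horient with ⟨hu, hy⟩ | ⟨hu, hy⟩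
    · rw [hu, hy]; exact fun hh => e.2.2.ne (Sum.inl_injective hh)
    · rw [hu, hy]; exact fun hh => e.2.2.ne' (Sum.inl_injective hh)
  have hsupp_eq : (w.rotate s hsmem).support =
      q₁.support ++ (r.support.tail ++ q₂.support.tail) := by
    rw [hdecomp, Walk.support_append, Walk.tail_support_append]
  have htail_eq : (w.rotate s hsmem).support.tail =
      q₁.support.tail ++ (r.support.tail ++ q₂.support.tail) := by
    rw [hsupp_eq, q₁.support_eq_cons]
    rfl
  have hnd := hw'cyc.support_nodup
  rw [htail_eq, List.nodup_append] at hnd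
  obtain ⟨hnd1, hnd23, hdisj1⟩ := hnd
  rw [List.nodup_append] at hnd23
  obtain ⟨hnd2, hnd3, hdisj23⟩ := hnd23
  have hu_mem_q₁tail : u ∈ q₁.support.tail := end_mem_tail_support_of_ne hsu q₁
  have hrnd : r.support.Nodup := by
    rw [r.support_eq_cons]
    exact List.nodup_cons.mpr
      ⟨fun hmem => hdisj1 _ hu_mem_q₁tail _ (List.mem_append_left _ hmem) rfl, hnd2⟩
  have hchar : ∀ v, v ∈ r.support ↔ (v ∈ w.support ∧ inCopy G c d e v) := by
    intro v
    constructor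
    · intro hv
      refine ⟨(hmemiff v).mp ?_, hrsupp v hv⟩
      rw [hsupp_eq]
      rw [r.support_eq_cons] at hv
      rcases (List.mem_cons.mp hv : v = u ∨ v ∈ r.support.tail) with rfl | hv'
      · exact List.mem_append_left _ q₁.end_mem_support
      · exact List.mem_append_right _ (List.mem_append_left _ hv')
    · rintro ⟨hvw, hvcop⟩
      have hvw' : v ∈ (w.rotate s hsmem).support := (hmemiff v).mpr hvw
      rw [hsupp_eq] at hvw'
      have hmem_of_inl : (v = Sum.inl e.1.1 ∨ v = Sum.inl e.1.2) → v ∈ r.support := by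
        rintro (rfl | rfl) <;> rcases horient with ⟨hu, hy⟩ | ⟨hu, hy⟩
        · rw [← hu]; exact r.start_mem_support
        · rw [← hy]; exact r.end_mem_support
        · rw [← hy]; exact r.end_mem_support
        · rw [← hu]; exact r.start_mem_support
      rcases List.mem_append.mp hvw' with hv1 | hv23
      · rcases hvcop with hc | hc | ⟨wj, rfl⟩
        · exact hmem_of_inl (Or.inl hc)
        · exact hmem_of_inl (Or.inr hc)
        · exfalso
          rcases walk_mem_support_incident q₁ hv1 with rfl | ⟨z', hadj, hze⟩
          · exact hsnot (eg_inr_inCopy_iff.mpr rfl)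
          · exact hq₁ _ hze (EIn_mk (eg_inr_inCopy_iff.mpr rfl) (eg_adj_inr_left hadj))
      · rcases List.mem_append.mp hv23 with hv2 | hv3
        · exact List.mem_of_mem_tail hv2
        · rcases hvcop with hc | hc | ⟨wj, rfl⟩
          · exact hmem_of_inl (Or.inl hc)
          · exact hmem_of_inl (Or.inr hc)
          · exfalso
            rcases walk_mem_support_incident q₂ (List.mem_of_mem_tail hv3) with heq | ⟨z', hadj, hze⟩
            · rcases horient with ⟨hu, hy⟩ | ⟨hu, hy⟩ <;> rw [hy] at heq <;> simp at heq
            · exact hq₂ _ hze (EIn_mk (eg_inr_inCopy_iff.mpr rfl) (eg_adj_inr_left hadj))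
  rcases horient with ⟨hu, hy⟩ | ⟨hu, hy⟩
  · refine ⟨r.copy hu hy, ?_, ?_⟩
    · rw [Walk.isPath_copy]; exact Walk.IsPath.mk' hrnd
    · intro v
      rw [Walk.support_copy]
      exact hchar v
  · refine ⟨(r.copy hu hy).reverse, ?_, ?_⟩
    · rw [Walk.isPath_reverse_iff, Walk.isPath_copy]; exact Walk.IsPath.mk' hrnd
    · intro v
      rw [Walk.support_reverse, List.mem_reverse, Walk.support_copy]
      exact hchar v

end EGCycle

section EGFinal

open SimpleGraph Walk

variable {V W : Type*} [LinearOrder V] {G : SimpleGraph V} {H : SimpleGraph W} {c d : W}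

/-- If the edge gadget has a cycle through an original vertex that is not contained in a
single copy, then `G` has a cycle. -/
lemma eg_not_acyclicG {x : EGVert G c d} (w1 : (edgeGadget G H c d).Walk x x)
    (hw1 : w1.IsCycle) {u₀ : V} (hx : x = Sum.inl u₀)
    (hone : ¬ ∃ e, ∀ v ∈ w1.support, inCopy G c d e v) : ¬ G.IsAcyclic := by
  intro hGac
  cases w1 with
  | nil => exact hw1.isCircuit.ne_nil rfl
  | @cons x z b h1 t1 =>
    subst hx
    have ht1nd : t1.support.Nodup := by simpa using hw1.support_nodup
    rcases eg_vert_cases z with ⟨u₁, rfl⟩ | ⟨e, wi, rfl⟩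
    · -- direct edge first
      have hadj : G.Adj u₀ u₁ := eg_adj_inl_inl h1
      obtain ⟨pg, hsub, hcov⟩ := eg_proj_aux t1.length t1 rfl rfl le_rfl ht1nd
      have hpgpath : pg.IsPath := Walk.IsPath.mk' (List.Nodup.of_map Sum.inl (ht1nd.sublist hsub))
      have hpA : (Walk.cons hadj.symm Walk.nil : G.Walk u₁ u₀).IsPath := by
        simp [hadj.ne']
      have heq := isAcyclic_iff_path_unique.mp hGac ⟨pg, hpgpath⟩
        ⟨Walk.cons hadj.symm Walk.nil, hpA⟩
      have hpg_eq : pg = Walk.cons hadj.symm Walk.nil := congrArg Subtype.val heq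
      obtain ⟨e, hex, hez⟩ := eg_adj_exists_copy h1
      apply hone
      refine ⟨e, ?_⟩
      have hu₀e := eg_inl_inCopy_iff.mp hex
      have hu₁e := eg_inl_inCopy_iff.mp hez
      obtain ⟨-, hpair⟩ := eg_pair_adj hu₀e hu₁e hadj.ne
      intro v hv
      rcases (by simpa using hv : v = Sum.inl u₀ ∨ v ∈ t1.support) with rfl | hv'
      · exact hex
      · rcases hcov v hv' with ⟨u, hu, rfl⟩ | ⟨e₃, wj, rfl, hedge⟩
        · rw [hpg_eq] at hu
          rcases (by simpa using hu : u = u₁ ∨ u = u₀) with rfl | rfl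
          · exact hez
          · exact hex
        · rw [hpg_eq] at hedge
          have h5 : s(e₃.1.1, e₃.1.2) = s(u₁, u₀) := by simpa using hedge
          have he₃ : e₃ = e := eg_pair_eq (h5.trans (Sym2.eq_swap.trans hpair))
          rw [he₃]
          exact eg_inr_inCopy_iff.mpr rfl
    · -- interior vertex first
      have hu₀e : u₀ = e.1.1 ∨ u₀ = e.1.2 := eg_adj_inl_inr h1
      obtain ⟨u', hu', q₂, hsub2, hcov2⟩ := eg_skip t1 ⟨wi, rfl⟩ ⟨u₀, rfl⟩
      by_cases hne : u' = u₀
      · -- the whole cycle is inside the copy, contradiction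
        subst hne
        exfalso
        apply hone
        refine ⟨e, ?_⟩
        have hq₂nd : q₂.support.Nodup := ht1nd.sublist hsub2
        have hq₂triv : ∀ v ∈ q₂.support, v = Sum.inl u' := by
          cases q₂ with
          | nil => intro v hv; simpa using hv
          | cons h' t' =>
            exact absurd hq₂nd (closed_not_nodup _ (by simp))
        intro v hv
        rcases (by simpa using hv : v = Sum.inl u' ∨ v ∈ t1.support) with rfl | hv'
        · exact eg_inl_inCopy_iff.mpr hu₀e
        · rcases hcov2 v hv' with hv2 | hcop
          · rw [hq₂triv v hv2]
            exact eg_inl_inCopy_iff.mpr hu₀e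
          · exact hcop
      · obtain ⟨hadj, hpair⟩ := eg_pair_adj hu₀e hu' (fun hh => hne hh.symm)
        obtain ⟨pg, hsub, hcov⟩ := eg_proj_aux q₂.length q₂ rfl rfl le_rfl (ht1nd.sublist hsub2)
        have hpgpath : pg.IsPath := Walk.IsPath.mk'
          (List.Nodup.of_map Sum.inl ((ht1nd.sublist hsub2).sublist hsub))
        have hpA : (Walk.cons hadj.symm Walk.nil : G.Walk u' u₀).IsPath := by
          simp [hne]
        have heq := isAcyclic_iff_path_unique.mp hGac ⟨pg, hpgpath⟩
          ⟨Walk.cons hadj.symm Walk.nil, hpA⟩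
        have hpg_eq : pg = Walk.cons hadj.symm Walk.nil := congrArg Subtype.val heq
        apply hone
        refine ⟨e, ?_⟩
        intro v hv
        rcases (by simpa using hv : v = Sum.inl u₀ ∨ v ∈ t1.support) with rfl | hv'
        · exact eg_inl_inCopy_iff.mpr hu₀e
        · rcases hcov2 v hv' with hv2 | hcop
          · rcases hcov v hv2 with ⟨u, hu, rfl⟩ | ⟨e₃, wj, rfl, hedge⟩
            · rw [hpg_eq] at hu
              rcases (by simpa using hu : u = u' ∨ u = u₀) with rfl | rfl
              · exact eg_inl_inCopy_iff.mpr hu'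
              · exact eg_inl_inCopy_iff.mpr hu₀e
            · rw [hpg_eq] at hedge
              have h5 : s(e₃.1.1, e₃.1.2) = s(u', u₀) := by simpa using hedge
              have he₃ : e₃ = e := eg_pair_eq (h5.trans (Sym2.eq_swap.trans hpair))
              rw [he₃]
              exact eg_inr_inCopy_iff.mpr rfl
          · exact hcop

end EGFinal

section EGBackward

open SimpleGraph Walk

variable {V W : Type*} [LinearOrder V] {G : SimpleGraph V} {H : SimpleGraph W} {c d : W}

lemma eg_backward (hcd : c ≠ d) (hGnot : ¬ G.IsAcyclic) (hreach : H.Reachable c d) :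
    ¬ (edgeGadget G H c d).IsAcyclic := by
  classical
  obtain ⟨hw⟩ := hreach
  have hex : ∃ (v : V) (pc : G.Walk v v), pc.IsCycle := by
    unfold SimpleGraph.IsAcyclic at hGnot
    push_neg at hGnot
    exact hGnot
  obtain ⟨v0, pc, hpc⟩ := hex
  cases pc with
  | nil => exact (hpc.isCircuit.ne_nil rfl).elim
  | @cons v0' z b hadj pt =>
    have hptpath : pt.IsPath := Walk.IsPath.mk' (by simpa using hpc.support_nodup)
    cases pt with
    | nil => exact (hadj.ne rfl).elim
    | @cons z0 z' b0 h' pt' =>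
      have hz'v : z' ≠ v0 := by
        rintro rfl
        cases pt' with
        | nil =>
          have := hpc.isTrail.edges_nodup
          simp [Sym2.eq_swap] at this
        | cons h'' pt'' =>
          have h0 : (Walk.cons h'' pt'').support.Nodup := by
            have := hptpath.support_nodup
            rw [Walk.support_cons, List.nodup_cons] at this
            exact this.2
          exact absurd h0 (closed_not_nodup _ (by simp))
      obtain ⟨A0, hA0path, hA0all⟩ := eg_edge_lift hcd hw.toPath.1 hw.toPath.2 hadj
      obtain ⟨B, hBpath, hBspec, hBmem⟩ :=
        eg_lift_walk hcd hw.toPath.1 hw.toPath.2 (Walk.cons h' pt') hptpath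
      have hApath : A0.reverse.IsPath := by
        rw [Walk.isPath_reverse_iff]; exact hA0path
      have hzB : Sum.inl z' ∈ B.support := hBmem z' (by simp [pt'.start_mem_support])
      have hzA : Sum.inl z' ∉ A0.reverse.support := by
        rw [Walk.support_reverse, List.mem_reverse]
        intro hmem
        rcases (esort_inl_iff hadj).mp (hA0all _ hmem) with h5 | h5
        · exact hz'v h5
        · exact h'.ne h5.symm
      intro hac
      have heq := isAcyclic_iff_path_unique.mp hac ⟨A0.reverse, hApath⟩ ⟨B, hBpath⟩
      have hAB : A0.reverse = B := congrArg Subtype.val heq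
      rw [hAB] at hzA
      exact hzA hzB

end EGBackward

theorem stmt_16 {V W : Type*} [LinearOrder V] (G : SimpleGraph V) (H : SimpleGraph W)
    (c d : W) (hcd : c ≠ d) :
    -- every cycle of the edge-gadget image is contained in a single copy of H, or meets
    -- each copy it uses in a path between the images of c and d in that copy
    (∀ (x : EGVert G c d) (w : (edgeGadget G H c d).Walk x x), w.IsCycle →
      (∃ e, ∀ v ∈ w.support, inCopy G c d e v) ∨
      (∀ e, (∃ ed ∈ w.edges, ∃ p q : EGVert G c d,
                ed = s(p, q) ∧ inCopy G c d e p ∧ inCopy G c d e q) →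
        ∃ p : (edgeGadget G H c d).Walk (Sum.inl e.1.1) (Sum.inl e.1.2),
          p.IsPath ∧ ∀ v, v ∈ p.support ↔ (v ∈ w.support ∧ inCopy G c d e v))) ∧
    -- consequently, if H is acyclic, the image has a cycle iff G has a cycle and
    -- H has a path from c to d
    (H.IsAcyclic →
      (¬ (edgeGadget G H c d).IsAcyclic ↔ (¬ G.IsAcyclic ∧ H.Reachable c d))) := by
  classical
  refine ⟨fun x w hw => eg_part1 hcd w hw, ?_⟩
  intro hH
  constructor
  · intro hnot
    have hex : ∃ (x : EGVert G c d) (w : (edgeGadget G H c d).Walk x x), w.IsCycle := by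
      by_contra hno
      push_neg at hno
      exact hnot (fun v w => hno v w)
    obtain ⟨x0, w0, hw0⟩ := hex
    by_cases hone : ∃ e, ∀ v ∈ w0.support, inCopy G c d e v
    · obtain ⟨e, hall⟩ := hone
      exact (eg_no_copy_cycle hcd hH w0 hw0 e hall).elim
    constructor
    · have hw0nil : ¬ w0.Nil := hw0.isCircuit.not_nil
      have hinl : ∃ u : V, Sum.inl u ∈ w0.support := by
        by_contra hno
        push_neg at hno
        rcases eg_vert_cases x0 with ⟨u, hx⟩ | ⟨e, wi, hx⟩
        · exact hno u (hx ▸ w0.start_mem_support)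
        · refine hone ⟨e, eg_all_interior w0 ⟨wi, hx⟩ ?_⟩
          intro v hv u hvu
          exact hno u (hvu ▸ hv)
      obtain ⟨u₀, hu₀⟩ := hinl
      refine eg_not_acyclicG (w0.rotate _ hu₀) (hw0.rotate hu₀) rfl ?_
      rintro ⟨e, hall⟩
      exact hone ⟨e, fun v hv => hall v ((rotate_mem_support w0 hu₀ hw0nil v).mpr hv)⟩
    · obtain ⟨z, hadj, hedmem⟩ := walk_exists_first_edge w0 hw0.isCircuit.not_nil
      obtain ⟨e, hex2, hez⟩ := eg_adj_exists_copy hadj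
      rcases eg_part1 hcd w0 hw0 with hcase | hR
      · exact absurd hcase hone
      obtain ⟨p, hppath, hpiff⟩ := hR e ⟨s(x0, z), hedmem, x0, z, rfl, hex2, hez⟩
      obtain ⟨p', -, -, -⟩ := eg_pull p (fun v hv => ((hpiff v).mp hv).2)
      have hgc : gW e c d (Sum.inl e.1.1 : EGVert G c d) = c := by simp [gW]
      have hgd : gW e c d (Sum.inl e.1.2 : EGVert G c d) = d := by simp [gW, e.2.2.ne']
      exact ⟨p'.copy hgc hgd⟩
  · rintro ⟨hGnot, hreach⟩
    exact eg_backward hcd hGnot hreach
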